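/- For every real η ∈ (0,1) and every real α₂ > -1, the series W(η) = Σ_{k=1}^∞ 2^{-kη} k^{α₂} converges and there exist constants 0 < c ≤ C (depending only on α₂) such that c·η^{-1-α₂} ≤ W(η) ≤ C·η^{-1-α₂}. -/

import Mathlib

open Real

-- rewrite term as a geometric power
lemma term_eq_pow (θ : ℝ) (k : ℕ) :
    (2:ℝ) ^ (-((k:ℝ)+1) * θ) = ((2:ℝ) ^ (-θ)) ^ (k+1) := by
  rw [← Real.rpow_natCast ((2:ℝ) ^ (-θ)) (k+1), ← Real.rpow_mul (by norm_num)]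
  push_cast
  ring_nf

lemma geom_summable {θ : ℝ} (h0 : 0 < θ) :
    Summable (fun k : ℕ => (2:ℝ) ^ (-((k:ℝ)+1) * θ)) := by
  have hr0 : (0:ℝ) ≤ (2:ℝ) ^ (-θ) := (Real.rpow_pos_of_pos two_pos _).le
  have hr1 : (2:ℝ) ^ (-θ) < 1 :=
    Real.rpow_lt_one_of_one_lt_of_neg one_lt_two (by linarith)
  have := (summable_nat_add_iff 1).mpr (summable_geometric_of_lt_one hr0 hr1)
  refine this.congr fun k => ?_
  rw [term_eq_pow]

lemma geom_tsum_le {θ : ℝ} (h0 : 0 < θ) (h1 : θ ≤ 1) :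
    ∑' k : ℕ, (2:ℝ) ^ (-((k:ℝ)+1) * θ) ≤ 3 / θ := by
  set r : ℝ := (2:ℝ) ^ (-θ) with hrdef
  have hr0 : (0:ℝ) < r := Real.rpow_pos_of_pos two_pos _
  have hr1 : r < 1 := Real.rpow_lt_one_of_one_lt_of_neg one_lt_two (by linarith)
  have hsum1 : Summable (fun k : ℕ => r ^ k) := summable_geometric_of_lt_one hr0.le hr1
  have hle1 : ∑' k : ℕ, (2:ℝ) ^ (-((k:ℝ)+1) * θ) ≤ (1 - r)⁻¹ := by
    rw [← tsum_geometric_of_lt_one hr0.le hr1]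
    refine Summable.tsum_le_tsum (fun k => ?_) (geom_summable h0) hsum1
    rw [term_eq_pow]
    calc r ^ (k+1) = r ^ k * r := by ring
    _ ≤ r ^ k * 1 := by nlinarith [pow_nonneg hr0.le k, pow_pos hr0 k]
    _ = r ^ k := by ring
  refine hle1.trans ?_
  -- show 1 - r ≥ θ/3
  have hx : r = Real.exp (-(θ * Real.log 2)) := by
    rw [hrdef, Real.rpow_def_of_pos two_pos]; ring_nf
  have hlog : (0.6931471803:ℝ) < Real.log 2 := Real.log_two_gt_d9
  have hlog2 : Real.log 2 < 0.6931471808 := Real.log_two_lt_d9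
  have hexple : Real.exp (θ * Real.log 2) ≤ 2 := by
    calc Real.exp (θ * Real.log 2) ≤ Real.exp (Real.log 2) := by
          apply Real.exp_le_exp.mpr; nlinarith
    _ = 2 := Real.exp_log two_pos
  have hb : θ * Real.log 2 + 1 ≤ Real.exp (θ * Real.log 2) := Real.add_one_le_exp _
  have hrval : 1 - r ≥ θ / 3 := by
    set E := Real.exp (θ * Real.log 2) with hE
    have hpos : 0 < E := Real.exp_pos _
    have hre : r = E⁻¹ := by rw [hx, Real.exp_neg]
    have hinv : E⁻¹ * E = 1 := inv_mul_cancel₀ hpos.ne'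
    have hEinvpos : 0 < E⁻¹ := inv_pos.mpr hpos
    rw [hre]
    nlinarith [mul_le_mul_of_nonneg_left hexple h0.le, mul_pos h0 hEinvpos,
      mul_pos hEinvpos hpos]
  have h3 : (0:ℝ) < θ / 3 := by linarith
  calc (1 - r)⁻¹ ≤ (θ/3)⁻¹ := by
        apply inv_anti₀ h3; linarith
  _ = 3 / θ := by rw [inv_div]

lemma pow_le_exp_aux (n : ℕ) (x : ℝ) (hx : 0 ≤ x) : x ^ n ≤ (n:ℝ)^n * Real.exp x := by
  rcases Nat.eq_zero_or_pos n with rfl | hn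
  · simpa using Real.one_le_exp hx
  · have hnR : (0:ℝ) < n := by exact_mod_cast hn
    have h1 : x ≤ (n:ℝ) * Real.exp (x / n) := by
      have := Real.add_one_le_exp (x / n)
      have hxn : x / n ≤ Real.exp (x / n) := by linarith
      calc x = (n:ℝ) * (x / n) := by field_simp
      _ ≤ (n:ℝ) * Real.exp (x / n) := by nlinarith
    calc x ^ n ≤ ((n:ℝ) * Real.exp (x / n)) ^ n := pow_le_pow_left₀ hx h1 n
    _ = (n:ℝ)^n * (Real.exp (x / n)) ^ n := mul_pow _ _ _
    _ = (n:ℝ)^n * Real.exp x := by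
        rw [← Real.exp_nat_mul]
        congr 1
        field_simp

lemma main_summable (α₂ : ℝ) {η : ℝ} (hη : 0 < η) :
    Summable (fun k : ℕ => (2:ℝ) ^ (-((k:ℝ)+1) * η) * ((k:ℝ)+1) ^ α₂) := by
  set r : ℝ := (2:ℝ) ^ (-η) with hrdef
  have hr0 : (0:ℝ) < r := Real.rpow_pos_of_pos two_pos _
  have hr1 : r < 1 := Real.rpow_lt_one_of_one_lt_of_neg one_lt_two (by linarith)
  set n : ℕ := ⌈α₂⌉₊ with hn
  have hbig : Summable (fun k : ℕ => ((k:ℝ)+1) ^ n * r ^ (k+1)) := by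
    have := (summable_nat_add_iff 1).mpr
      (summable_pow_mul_geometric_of_norm_lt_one n
        (r := r) (by rwa [Real.norm_eq_abs, abs_of_nonneg hr0.le]))
    refine this.congr fun k => ?_
    push_cast
    ring
  refine Summable.of_nonneg_of_le (fun k => by positivity) (fun k => ?_) hbig
  rw [term_eq_pow]
  rw [mul_comm (((k:ℝ)+1) ^ n) _]
  apply mul_le_mul_of_nonneg_left _ (pow_nonneg hr0.le _)
  have h1 : (1:ℝ) ≤ (k:ℝ)+1 := by have := Nat.cast_nonneg (α := ℝ) k; linarith
  calc ((k:ℝ)+1) ^ α₂ ≤ ((k:ℝ)+1) ^ (n:ℝ) :=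
        Real.rpow_le_rpow_of_exponent_le h1 (Nat.le_ceil α₂)
  _ = ((k:ℝ)+1) ^ n := Real.rpow_natCast _ n

-- x^α₂ ≤ A · 2^(x/2) for x > 0, α₂ ≥ 0
lemma rpow_le_A (α₂ : ℝ) (hα₂ : 0 ≤ α₂) (x : ℝ) (hx : 0 < x) :
    x ^ α₂ ≤ ((2 / Real.log 2) ^ ⌈α₂⌉₊ * (⌈α₂⌉₊:ℝ) ^ ⌈α₂⌉₊ + 1) * (2:ℝ) ^ (x/2) := by
  set n : ℕ := ⌈α₂⌉₊ with hn
  set A : ℝ := (2 / Real.log 2) ^ n * (n:ℝ) ^ n + 1 with hA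
  have hlog : (0:ℝ) < Real.log 2 := Real.log_pos one_lt_two
  have hApos : (0:ℝ) < A := by positivity
  have h2x : (1:ℝ) ≤ (2:ℝ) ^ (x/2) :=
    Real.one_le_rpow one_le_two (by linarith)
  have h2xpos : (0:ℝ) < (2:ℝ) ^ (x/2) := Real.rpow_pos_of_pos two_pos _
  rcases le_or_gt x 1 with hx1 | hx1
  · have hle1 : x ^ α₂ ≤ 1 := Real.rpow_le_one hx.le hx1 hα₂
    have hA1 : (1:ℝ) ≤ A := by
      have : (0:ℝ) ≤ (2 / Real.log 2) ^ n * (n:ℝ) ^ n := by positivity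
      rw [hA]; linarith
    calc x ^ α₂ ≤ 1 := hle1
    _ = 1 * 1 := by ring
    _ ≤ A * (2:ℝ) ^ (x/2) := mul_le_mul hA1 h2x one_pos.le (by linarith)
  · have hxa : x ^ α₂ ≤ x ^ n := by
      calc x ^ α₂ ≤ x ^ (n:ℝ) :=
            Real.rpow_le_rpow_of_exponent_le hx1.le (Nat.le_ceil α₂)
      _ = x ^ n := Real.rpow_natCast _ n
    have key : x ^ n ≤ (2 / Real.log 2) ^ n * (n:ℝ) ^ n * (2:ℝ) ^ (x/2) := by
      have h2 : Real.exp (x * Real.log 2 / 2) = (2:ℝ) ^ (x/2) := by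
        rw [show x * Real.log 2 / 2 = Real.log 2 * (x/2) by ring]
        exact (Real.rpow_def_of_pos two_pos (x/2)).symm
      calc x ^ n = (2 / Real.log 2) ^ n * (x * Real.log 2 / 2) ^ n := by
            rw [← mul_pow]; congr 1; field_simp
      _ ≤ (2 / Real.log 2) ^ n * ((n:ℝ)^n * Real.exp (x * Real.log 2 / 2)) :=
            mul_le_mul_of_nonneg_left (pow_le_exp_aux n _ (by positivity)) (by positivity)
      _ = (2 / Real.log 2) ^ n * (n:ℝ) ^ n * (2:ℝ) ^ (x/2) := by rw [h2]; ring
    calc x ^ α₂ ≤ x ^ n := hxa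
    _ ≤ (2 / Real.log 2) ^ n * (n:ℝ) ^ n * (2:ℝ) ^ (x/2) := key
    _ ≤ A * (2:ℝ) ^ (x/2) := by
        apply mul_le_mul_of_nonneg_right _ h2xpos.le
        rw [hA]; linarith

lemma upper_nonneg (α₂ : ℝ) (hα₂ : 0 ≤ α₂) {η : ℝ} (hη : 0 < η) (hη1 : η < 1) :
    (∑' k : ℕ, (2:ℝ) ^ (-((k:ℝ)+1) * η) * ((k:ℝ)+1) ^ α₂)
      ≤ (6 * ((2 / Real.log 2) ^ ⌈α₂⌉₊ * (⌈α₂⌉₊:ℝ) ^ ⌈α₂⌉₊ + 1)) * η ^ (-1 - α₂) := by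
  set n : ℕ := ⌈α₂⌉₊ with hn
  set A : ℝ := (2 / Real.log 2) ^ n * (n:ℝ) ^ n + 1 with hA
  have hlog : (0:ℝ) < Real.log 2 := Real.log_pos one_lt_two
  have hApos : (0:ℝ) < A := by positivity
  have hηa : (0:ℝ) < η ^ (-α₂) := Real.rpow_pos_of_pos hη _
  -- termwise bound
  have hterm : ∀ k : ℕ, (2:ℝ) ^ (-((k:ℝ)+1) * η) * ((k:ℝ)+1) ^ α₂
      ≤ A * η ^ (-α₂) * (2:ℝ) ^ (-((k:ℝ)+1) * (η/2)) := by
    intro k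
    set m : ℝ := (k:ℝ)+1 with hm
    have hm1 : (1:ℝ) ≤ m := by have := Nat.cast_nonneg (α := ℝ) k; rw [hm]; linarith
    have hm0 : (0:ℝ) < m := by linarith
    have hx : (0:ℝ) < m * η := by positivity
    -- m^α₂ = (mη)^α₂ * η^(-α₂)
    have hsplit : m ^ α₂ = (m * η) ^ α₂ * η ^ (-α₂) := by
      rw [Real.mul_rpow hm0.le hη.le, Real.rpow_neg hη.le]
      field_simp
    have hbound := rpow_le_A α₂ hα₂ (m * η) hx
    have h2a : (0:ℝ) < (2:ℝ) ^ (-(m * η)) := Real.rpow_pos_of_pos two_pos _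
    have hcomb : (2:ℝ) ^ (-(m*η)) * (m*η) ^ α₂ ≤ A * (2:ℝ) ^ (-(m*η)/2) := by
      calc (2:ℝ) ^ (-(m*η)) * (m*η) ^ α₂
          ≤ (2:ℝ) ^ (-(m*η)) * (A * (2:ℝ) ^ ((m*η)/2)) :=
            mul_le_mul_of_nonneg_left hbound h2a.le
      _ = A * ((2:ℝ) ^ (-(m*η)) * (2:ℝ) ^ ((m*η)/2)) := by ring
      _ = A * (2:ℝ) ^ (-(m*η)/2) := by
            rw [← Real.rpow_add two_pos]
            congr 1
            ring
    have hexp1 : -m * η = -(m*η) := by ring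
    have hexp2 : -m * (η/2) = -(m*η)/2 := by ring
    calc (2:ℝ) ^ (-m * η) * m ^ α₂
        = (2:ℝ) ^ (-(m*η)) * ((m*η) ^ α₂ * η ^ (-α₂)) := by rw [hexp1, hsplit]
    _ = ((2:ℝ) ^ (-(m*η)) * (m*η) ^ α₂) * η ^ (-α₂) := by ring
    _ ≤ (A * (2:ℝ) ^ (-(m*η)/2)) * η ^ (-α₂) :=
        mul_le_mul_of_nonneg_right hcomb hηa.le
    _ = A * η ^ (-α₂) * (2:ℝ) ^ (-m * (η/2)) := by rw [hexp2]; ring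
  have hgs : Summable (fun k : ℕ => (2:ℝ) ^ (-((k:ℝ)+1) * (η/2))) :=
    geom_summable (by linarith)
  have h1 : (∑' k : ℕ, (2:ℝ) ^ (-((k:ℝ)+1) * η) * ((k:ℝ)+1) ^ α₂)
      ≤ ∑' k : ℕ, A * η ^ (-α₂) * (2:ℝ) ^ (-((k:ℝ)+1) * (η/2)) :=
    Summable.tsum_le_tsum hterm (main_summable α₂ hη) (hgs.mul_left _)
  have h2 : (∑' k : ℕ, A * η ^ (-α₂) * (2:ℝ) ^ (-((k:ℝ)+1) * (η/2)))
      = A * η ^ (-α₂) * ∑' k : ℕ, (2:ℝ) ^ (-((k:ℝ)+1) * (η/2)) := tsum_mul_left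
  have h3 : A * η ^ (-α₂) * (∑' k : ℕ, (2:ℝ) ^ (-((k:ℝ)+1) * (η/2)))
      ≤ A * η ^ (-α₂) * (3 / (η/2)) := by
    apply mul_le_mul_of_nonneg_left (geom_tsum_le (by linarith) (by linarith)) (by positivity)
  have h4 : A * η ^ (-α₂) * (3 / (η/2)) = 6 * A * (η ^ (-α₂) * η ^ (-1:ℝ)) := by
    rw [Real.rpow_neg_one]
    field_simp
    ring
  have h5 : η ^ (-α₂) * η ^ (-1:ℝ) = η ^ (-1 - α₂) := by
    rw [← Real.rpow_add hη]
    congr 1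
    ring
  calc (∑' k : ℕ, (2:ℝ) ^ (-((k:ℝ)+1) * η) * ((k:ℝ)+1) ^ α₂)
      ≤ A * η ^ (-α₂) * (3 / (η/2)) := by rw [← h2] at h3; exact h1.trans h3
  _ = 6 * A * η ^ (-1 - α₂) := by rw [h4, h5]

-- key pointwise bound: β (k+1)^(β-1) ≤ (k+1)^β - k^β for β ∈ (0,1]
lemma telescope_bound {β : ℝ} (h0 : 0 < β) (h1 : β ≤ 1) (k : ℕ) :
    β * ((k:ℝ)+1) ^ (β - 1) ≤ ((k:ℝ)+1) ^ β - (k:ℝ) ^ β := by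
  set m : ℝ := (k:ℝ)+1 with hm
  have hk0 : (0:ℝ) ≤ (k:ℝ) := Nat.cast_nonneg k
  have hm1 : (1:ℝ) ≤ m := by rw [hm]; linarith
  have hm0 : (0:ℝ) < m := by linarith
  have hfrac : (k:ℝ) = m * (1 + (-1/m)) := by
    rw [hm]; field_simp; ring
  have h1m : (1:ℝ)/m ≤ 1 := by rw [div_le_one hm0]; exact hm1
  have h0m : (0:ℝ) ≤ 1 + (-1/m) := by rw [neg_div]; linarith
  have hbern : (1 + (-1/m)) ^ β ≤ 1 + β * (-1/m) := by
    apply rpow_one_add_le_one_add_mul_self _ h0.le h1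
    rw [neg_div]; linarith
  have hkβ : (k:ℝ) ^ β ≤ m ^ β * (1 + β * (-1/m)) := by
    rw [hfrac, Real.mul_rpow hm0.le h0m]
    apply mul_le_mul_of_nonneg_left hbern (Real.rpow_nonneg hm0.le β)
  have hmb : m ^ β * (β / m) = β * m ^ (β - 1) := by
    rw [Real.rpow_sub hm0, Real.rpow_one]
    field_simp
  have : m ^ β * (1 + β * (-1/m)) = m ^ β - β * m ^ (β-1) := by
    rw [← hmb]; ring
  rw [this] at hkβ
  linarith

lemma upper_neg (α₂ : ℝ) (hα₂ : -1 < α₂) (hα₂' : α₂ < 0) {η : ℝ} (hη : 0 < η) (hη1 : η < 1) :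
    (∑' k : ℕ, (2:ℝ) ^ (-((k:ℝ)+1) * η) * ((k:ℝ)+1) ^ α₂)
      ≤ (2 * (1+α₂)⁻¹ + 3) * η ^ (-1 - α₂) := by
  set β : ℝ := 1 + α₂ with hβ
  have hβ0 : 0 < β := by rw [hβ]; linarith
  have hβ1 : β ≤ 1 := by rw [hβ]; linarith
  set N : ℕ := ⌈η⁻¹⌉₊ with hN
  have hηinv : (1:ℝ) < η⁻¹ := by
    rw [lt_inv_comm₀] <;> simp_all
  have hNge : η⁻¹ ≤ (N:ℝ) := Nat.le_ceil _
  have hNle : (N:ℝ) ≤ 2 * η⁻¹ := by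
    have := Nat.ceil_lt_add_one (by positivity : (0:ℝ) ≤ η⁻¹)
    rw [← hN] at this
    linarith
  have hsumf := main_summable α₂ hη
  set f : ℕ → ℝ := fun k => (2:ℝ) ^ (-((k:ℝ)+1) * η) * ((k:ℝ)+1) ^ α₂ with hf
  have hsplit : ∑ k ∈ Finset.range N, f k + ∑' k, f (k + N) = ∑' k, f k :=
    Summable.sum_add_tsum_nat_add N hsumf
  -- head bound
  have hhead : ∑ k ∈ Finset.range N, f k ≤ β⁻¹ * (N:ℝ) ^ β := by
    have hstep : ∀ k : ℕ, f k ≤ β⁻¹ * (((k:ℝ)+1) ^ β - (k:ℝ) ^ β) := by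
      intro k
      have h2le : (2:ℝ) ^ (-((k:ℝ)+1) * η) ≤ 1 := by
        apply Real.rpow_le_one_of_one_le_of_nonpos one_le_two
        have : (0:ℝ) ≤ (k:ℝ)+1 := by positivity
        nlinarith
      have hpos : (0:ℝ) ≤ ((k:ℝ)+1) ^ α₂ := Real.rpow_nonneg (by positivity) _
      have h1 : f k ≤ ((k:ℝ)+1) ^ α₂ := by
        rw [hf]
        calc (2:ℝ) ^ (-((k:ℝ)+1) * η) * ((k:ℝ)+1) ^ α₂ ≤ 1 * ((k:ℝ)+1) ^ α₂ :=
              mul_le_mul_of_nonneg_right h2le hpos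
        _ = ((k:ℝ)+1) ^ α₂ := one_mul _
      have h2 := telescope_bound hβ0 hβ1 k
      have hβα : β - 1 = α₂ := by rw [hβ]; ring
      rw [hβα] at h2
      calc f k ≤ ((k:ℝ)+1) ^ α₂ := h1
      _ = β⁻¹ * (β * ((k:ℝ)+1) ^ α₂) := by field_simp
      _ ≤ β⁻¹ * (((k:ℝ)+1) ^ β - (k:ℝ) ^ β) := by
          apply mul_le_mul_of_nonneg_left h2 (by positivity)
    calc ∑ k ∈ Finset.range N, f k
        ≤ ∑ k ∈ Finset.range N, β⁻¹ * (((k:ℝ)+1) ^ β - (k:ℝ) ^ β) :=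
          Finset.sum_le_sum fun k _ => hstep k
    _ = β⁻¹ * ∑ k ∈ Finset.range N, ((((k:ℕ)+1:ℕ):ℝ) ^ β - ((k:ℕ):ℝ) ^ β) := by
          rw [Finset.mul_sum]; congr 1; ext k; push_cast; ring
    _ = β⁻¹ * ((N:ℝ) ^ β - ((0:ℕ):ℝ) ^ β) := by
          rw [Finset.sum_range_sub (f := fun k : ℕ => ((k:ℝ)) ^ β)]
    _ = β⁻¹ * (N:ℝ) ^ β := by
          norm_num [Real.zero_rpow hβ0.ne']
  have hheadfinal : ∑ k ∈ Finset.range N, f k ≤ 2 * β⁻¹ * η ^ (-β) := by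
    refine hhead.trans ?_
    have h1 : (N:ℝ) ^ β ≤ (2 * η⁻¹) ^ β :=
      Real.rpow_le_rpow (Nat.cast_nonneg N) hNle hβ0.le
    have h2 : (2 * η⁻¹ : ℝ) ^ β = 2 ^ β * η ^ (-β) := by
      rw [Real.mul_rpow (by norm_num) (by positivity), ← Real.rpow_neg_one η,
        ← Real.rpow_mul hη.le, neg_one_mul]
    have h3 : (2:ℝ) ^ β ≤ 2 := by
      calc (2:ℝ) ^ β ≤ (2:ℝ) ^ (1:ℝ) := Real.rpow_le_rpow_of_exponent_le one_le_two hβ1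
      _ = 2 := Real.rpow_one 2
    have h4 : (0:ℝ) ≤ η ^ (-β) := Real.rpow_nonneg hη.le _
    have h5 : (0:ℝ) ≤ β⁻¹ := by positivity
    calc β⁻¹ * (N:ℝ) ^ β ≤ β⁻¹ * (2 ^ β * η ^ (-β)) := by
          rw [← h2]; exact mul_le_mul_of_nonneg_left h1 h5
    _ ≤ β⁻¹ * (2 * η ^ (-β)) := by
          apply mul_le_mul_of_nonneg_left _ h5
          exact mul_le_mul_of_nonneg_right h3 h4
    _ = 2 * β⁻¹ * η ^ (-β) := by ring
  -- tail bound
  have htail : ∑' k, f (k + N) ≤ 3 * η ^ (-1 - α₂) := by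
    have hpt : ∀ k : ℕ, f (k + N) ≤ η ^ (-α₂) * (2:ℝ) ^ (-((k:ℝ)+1) * η) := by
      intro k
      have hk0 : (0:ℝ) ≤ (k:ℝ) := Nat.cast_nonneg k
      have hN0 : (0:ℝ) ≤ (N:ℝ) := Nat.cast_nonneg N
      have hNpos : (0:ℝ) < η⁻¹ := by positivity
      have hge : η⁻¹ ≤ (k:ℝ) + (N:ℝ) + 1 := by linarith
      have ha : ((k:ℝ) + (N:ℝ) + 1) ^ α₂ ≤ η ^ (-α₂) := by
        calc ((k:ℝ) + (N:ℝ) + 1) ^ α₂ ≤ (η⁻¹) ^ α₂ :=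
              Real.rpow_le_rpow_of_nonpos hNpos hge hα₂'.le
        _ = η ^ (-α₂) := by
            rw [← Real.rpow_neg_one η, ← Real.rpow_mul hη.le, neg_one_mul]
      have hb : (2:ℝ) ^ (-((k:ℝ) + (N:ℝ) + 1) * η) ≤ (2:ℝ) ^ (-((k:ℝ)+1) * η) := by
        apply Real.rpow_le_rpow_of_exponent_le one_le_two
        nlinarith
      have hbpos : (0:ℝ) ≤ (2:ℝ) ^ (-((k:ℝ) + (N:ℝ) + 1) * η) :=
        (Real.rpow_pos_of_pos two_pos _).le
      have hfeq : f (k + N)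
          = (2:ℝ) ^ (-((k:ℝ)+(N:ℝ)+1) * η) * ((k:ℝ)+(N:ℝ)+1) ^ α₂ := by
        simp only [hf]
        push_cast
        ring_nf
      calc f (k + N) = (2:ℝ) ^ (-((k:ℝ)+(N:ℝ)+1) * η) * ((k:ℝ)+(N:ℝ)+1) ^ α₂ := hfeq
      _ ≤ (2:ℝ) ^ (-((k:ℝ)+(N:ℝ)+1) * η) * η ^ (-α₂) :=
            mul_le_mul_of_nonneg_left ha hbpos
      _ ≤ (2:ℝ) ^ (-((k:ℝ)+1) * η) * η ^ (-α₂) :=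
            mul_le_mul_of_nonneg_right hb (Real.rpow_nonneg hη.le _)
      _ = η ^ (-α₂) * (2:ℝ) ^ (-((k:ℝ)+1) * η) := by ring
    have hs1 : Summable (fun k => f (k + N)) := (summable_nat_add_iff N).mpr hsumf
    have hs2 : Summable (fun k : ℕ => η ^ (-α₂) * (2:ℝ) ^ (-((k:ℝ)+1) * η)) :=
      (geom_summable hη).mul_left _
    have h1 := Summable.tsum_le_tsum hpt hs1 hs2
    have h2 : ∑' k : ℕ, η ^ (-α₂) * (2:ℝ) ^ (-((k:ℝ)+1) * η)
        = η ^ (-α₂) * ∑' k : ℕ, (2:ℝ) ^ (-((k:ℝ)+1) * η) := tsum_mul_left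
    have h3 : η ^ (-α₂) * (∑' k : ℕ, (2:ℝ) ^ (-((k:ℝ)+1) * η)) ≤ η ^ (-α₂) * (3/η) :=
      mul_le_mul_of_nonneg_left (geom_tsum_le hη hη1.le) (Real.rpow_nonneg hη.le _)
    have h4 : η ^ (-α₂) * (3/η) = 3 * η ^ (-1 - α₂) := by
      rw [show (-1 - α₂ : ℝ) = -α₂ + -1 by ring, Real.rpow_add hη, Real.rpow_neg_one]
      ring
    rw [h2] at h1
    linarith
  have hβeq : -β = -1 - α₂ := by rw [hβ]; ring
  rw [← hsplit]
  calc ∑ k ∈ Finset.range N, f k + ∑' k, f (k + N)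
      ≤ 2 * β⁻¹ * η ^ (-β) + 3 * η ^ (-1 - α₂) := add_le_add hheadfinal htail
  _ = (2 * β⁻¹ + 3) * η ^ (-1 - α₂) := by rw [hβeq]; ring

lemma lower_bound (α₂ : ℝ) (hα₂ : -1 < α₂) {η : ℝ} (hη : 0 < η) (hη1 : η < 1) :
    (1/64 : ℝ) * η ^ (-1 - α₂) ≤ ∑' k : ℕ, (2:ℝ) ^ (-((k:ℝ)+1) * η) * ((k:ℝ)+1) ^ α₂ := by
  set f : ℕ → ℝ := fun k => (2:ℝ) ^ (-((k:ℝ)+1) * η) * ((k:ℝ)+1) ^ α₂ with hf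
  set N : ℕ := ⌈η⁻¹⌉₊ with hN
  have hηinv0 : (0:ℝ) < η⁻¹ := by positivity
  have hηinv1 : (1:ℝ) ≤ η⁻¹ := by
    rw [le_inv_comm₀ one_pos hη]; simpa using hη1.le
  have hNge : η⁻¹ ≤ (N:ℝ) := Nat.le_ceil _
  have hNle : (N:ℝ) ≤ 2 * η⁻¹ := by
    have := Nat.ceil_lt_add_one hηinv0.le
    rw [← hN] at this
    linarith
  have hN1 : 1 ≤ N := by
    rw [hN]
    exact_mod_cast Nat.one_le_ceil_iff.mpr hηinv0
  -- per-term lower bound on the window m = k+1 ∈ [N, 2N]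
  have hterm : ∀ k ∈ Finset.Ico (N-1) (2*N-1), (1/64 : ℝ) * η ^ (-α₂) ≤ f k := by
    intro k hk
    rw [Finset.mem_Ico] at hk
    have hk1 : N ≤ k + 1 := by omega
    have hk2 : k + 1 ≤ 2 * N := by omega
    set m : ℝ := (k:ℝ)+1 with hm
    have hmge : η⁻¹ ≤ m := by
      have : (N:ℝ) ≤ m := by rw [hm]; exact_mod_cast hk1
      linarith
    have hmle : m ≤ 4 * η⁻¹ := by
      have : m ≤ 2*(N:ℝ) := by rw [hm]; exact_mod_cast hk2
      linarith
    have hm0 : (0:ℝ) < m := lt_of_lt_of_le hηinv0 hmge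
    -- 2^(-mη) ≥ 1/16
    have hexp : (-4:ℝ) ≤ -m * η := by
      have h1 : m * η ≤ 4 * η⁻¹ * η := mul_le_mul_of_nonneg_right hmle hη.le
      have h2 : 4 * η⁻¹ * η = 4 := by field_simp
      nlinarith
    have h2m : (1/16 : ℝ) ≤ (2:ℝ) ^ (-m * η) := by
      calc (1/16 : ℝ) = (2:ℝ) ^ (-4 : ℝ) := by
            rw [show ((-4:ℝ)) = ((-4 : ℤ) : ℝ) by norm_num, Real.rpow_intCast]
            norm_num
      _ ≤ (2:ℝ) ^ (-m * η) := Real.rpow_le_rpow_of_exponent_le one_le_two hexp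
    -- m^α₂ ≥ (1/4) η^(-α₂)
    have hηa : (0:ℝ) < η ^ (-α₂) := Real.rpow_pos_of_pos hη _
    have hinv_eq : (η⁻¹) ^ α₂ = η ^ (-α₂) := by
      rw [← Real.rpow_neg_one η, ← Real.rpow_mul hη.le, neg_one_mul]
    have hma : (1/4 : ℝ) * η ^ (-α₂) ≤ m ^ α₂ := by
      rcases le_or_gt 0 α₂ with hpos | hneg
      · have h1 : (η⁻¹) ^ α₂ ≤ m ^ α₂ := Real.rpow_le_rpow hηinv0.le hmge hpos
        rw [hinv_eq] at h1
        nlinarith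
      · have h1 : (4 * η⁻¹ : ℝ) ^ α₂ ≤ m ^ α₂ :=
          Real.rpow_le_rpow_of_nonpos hm0 hmle hneg.le
        have h2 : (4 * η⁻¹ : ℝ) ^ α₂ = 4 ^ α₂ * η ^ (-α₂) := by
          rw [Real.mul_rpow (by norm_num) hηinv0.le, hinv_eq]
        have h3 : (1/4 : ℝ) ≤ (4:ℝ) ^ α₂ := by
          calc (1/4 : ℝ) = (4:ℝ) ^ (-1 : ℝ) := by
                rw [show ((-1:ℝ)) = ((-1 : ℤ) : ℝ) by norm_num, Real.rpow_intCast]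
                norm_num
          _ ≤ (4:ℝ) ^ α₂ := Real.rpow_le_rpow_of_exponent_le (by norm_num) hα₂.le
        rw [h2] at h1
        nlinarith
    calc (1/64 : ℝ) * η ^ (-α₂) = (1/16) * ((1/4) * η ^ (-α₂)) := by ring
    _ ≤ (2:ℝ) ^ (-m * η) * m ^ α₂ := by
        apply mul_le_mul h2m hma (by positivity) (by positivity)
    _ = f k := by rw [hf]
  have hcard : (Finset.Ico (N-1) (2*N-1)).card = N := by
    rw [Nat.card_Ico]; omega
  have hsumge : (N:ℝ) * ((1/64 : ℝ) * η ^ (-α₂)) ≤ ∑ k ∈ Finset.Ico (N-1) (2*N-1), f k := by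
    have := Finset.card_nsmul_le_sum (Finset.Ico (N-1) (2*N-1)) f ((1/64 : ℝ) * η ^ (-α₂)) hterm
    rwa [hcard, nsmul_eq_mul] at this
  have hle_tsum : ∑ k ∈ Finset.Ico (N-1) (2*N-1), f k ≤ ∑' k, f k :=
    Summable.sum_le_tsum _ (fun k _ => by simp only [hf]; positivity) (main_summable α₂ hη)
  have hfinal : (1/64 : ℝ) * η ^ (-1-α₂) ≤ (N:ℝ) * ((1/64 : ℝ) * η ^ (-α₂)) := by
    have h5 : η ^ (-1-α₂) = η⁻¹ * η ^ (-α₂) := by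
      rw [show (-1-α₂ : ℝ) = -1 + -α₂ by ring, Real.rpow_add hη, Real.rpow_neg_one]
    rw [h5]
    have hηa : (0:ℝ) ≤ η ^ (-α₂) := (Real.rpow_pos_of_pos hη _).le
    nlinarith
  linarith


/-- For every `α₂ > -1`, the series `W(η) = Σ_{k≥1} 2^{-kη} k^{α₂}` converges for every
`η ∈ (0,1)`, and there are constants `0 < c ≤ C` depending only on `α₂` with
`c·η^{-1-α₂} ≤ W(η) ≤ C·η^{-1-α₂}`. -/
theorem series_asymptotics_alpha_gt_neg_one (α₂ : ℝ) (hα₂ : -1 < α₂) :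
    (∀ η ∈ Set.Ioo (0:ℝ) 1,
      Summable (fun k : ℕ => (2:ℝ) ^ (-((k:ℝ)+1) * η) * ((k:ℝ)+1) ^ α₂)) ∧
    ∃ c C : ℝ, 0 < c ∧ c ≤ C ∧ ∀ η ∈ Set.Ioo (0:ℝ) 1,
      c * η ^ (-1 - α₂) ≤ (∑' k : ℕ, (2:ℝ) ^ (-((k:ℝ)+1) * η) * ((k:ℝ)+1) ^ α₂) ∧
      (∑' k : ℕ, (2:ℝ) ^ (-((k:ℝ)+1) * η) * ((k:ℝ)+1) ^ α₂) ≤ C * η ^ (-1 - α₂) := by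
  constructor
  · intro η hη
    exact main_summable α₂ hη.1
  · obtain ⟨C₀, hC₀⟩ : ∃ C₀ : ℝ, ∀ η ∈ Set.Ioo (0:ℝ) 1,
        (∑' k : ℕ, (2:ℝ) ^ (-((k:ℝ)+1) * η) * ((k:ℝ)+1) ^ α₂) ≤ C₀ * η ^ (-1 - α₂) := by
      rcases le_or_gt 0 α₂ with hpos | hneg
      · exact ⟨6 * ((2 / Real.log 2) ^ ⌈α₂⌉₊ * (⌈α₂⌉₊:ℝ) ^ ⌈α₂⌉₊ + 1),
          fun η hη => upper_nonneg α₂ hpos hη.1 hη.2⟩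
      · exact ⟨2 * (1+α₂)⁻¹ + 3, fun η hη => upper_neg α₂ hα₂ hneg hη.1 hη.2⟩
    refine ⟨1/64, max C₀ (1/64), by norm_num, le_max_right _ _, ?_⟩
    intro η hη
    refine ⟨lower_bound α₂ hα₂ hη.1 hη.2, ?_⟩
    have h := hC₀ η hη
    have h2 : C₀ * η ^ (-1-α₂) ≤ max C₀ (1/64) * η ^ (-1-α₂) :=
      mul_le_mul_of_nonneg_right (le_max_left _ _) (Real.rpow_nonneg hη.1.le _)
    linarith
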